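/- (Swartz) Let Δ be a (d−1)-dimensional pure simplicial complex on [n]. Then for every i = 1, 2, …, d, i·h_i(Δ) + (d−i+1)·h_{i−1}(Δ) = Σ_{v∈[n]} h_{i−1}(lk_Δ({v})). -/

import Mathlib

/-! Combinatorial core: simplicial complexes, reduced simplicial homology over a
field, links, dimension, f- and h-vectors, and Serre's condition (S_r). -/

namespace SerrePaper

open scoped Classical

/-- `Δ` is a simplicial complex on the vertex set `Fin n`: every singleton is a face
and it is closed under taking subsets. -/
def IsSimplicialComplex {n : ℕ} (Δ : Set (Finset (Fin n))) : Prop :=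
  (∀ i : Fin n, {i} ∈ Δ) ∧ ∀ F ∈ Δ, ∀ G, G ⊆ F → G ∈ Δ

/-- The faces of `Δ` of cardinality `c` (so of dimension `c - 1`), for `c : ℤ`. -/
def cFaces {n : ℕ} (Δ : Set (Finset (Fin n))) (c : ℤ) : Type :=
  {F : Finset (Fin n) // F ∈ Δ ∧ (F.card : ℤ) = c}

/-- The space of (augmented) simplicial `c-1`-chains of `Δ` with coefficients in `K`. -/
abbrev Chains (K : Type) [Field K] {n : ℕ} (Δ : Set (Finset (Fin n))) (c : ℤ) : Type :=
  cFaces Δ c → K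

/-- The simplicial boundary map from chains on cardinality-`(c+1)` faces to chains on
cardinality-`c` faces. -/
noncomputable def bd (K : Type) [Field K] {n : ℕ} (Δ : Set (Finset (Fin n))) (c : ℤ) :
    Chains K Δ (c + 1) →ₗ[K] Chains K Δ c where
  toFun f G := ∑ v : Fin n,
    if h : v ∉ G.1 ∧ insert v G.1 ∈ Δ then
      (-1 : K) ^ (G.1.filter (fun u => u < v)).card *
        f ⟨insert v G.1, h.2, by
          rw [Finset.card_insert_of_notMem h.1]
          have := G.2.2
          push_cast
          omega⟩
    else 0
  map_add' f g := by
    funext G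
    simp only [Pi.add_apply]
    rw [← Finset.sum_add_distrib]
    refine Finset.sum_congr rfl fun v _ => ?_
    by_cases h : v ∉ G.1 ∧ insert v G.1 ∈ Δ
    · simp only [dif_pos h, Pi.add_apply]; exact mul_add _ _ _
    · simp only [dif_neg h, add_zero]
  map_smul' c f := by
    funext G
    simp only [Pi.smul_apply, smul_eq_mul, RingHom.id_apply]
    rw [Finset.mul_sum]
    refine Finset.sum_congr rfl fun v _ => ?_
    by_cases h : v ∉ G.1 ∧ insert v G.1 ∈ Δ
    · simp only [dif_pos h, Pi.smul_apply, smul_eq_mul]; exact mul_left_comm _ _ _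
    · simp only [dif_neg h, mul_zero]

/-- Vanishing of the `i`-th reduced simplicial homology of `Δ` with coefficients
in `K`:  every `i`-cycle is an `(i+1)`-boundary (in the augmented chain complex,
so that `i = -1` is also meaningful). -/
def ReducedHomologyVanishes (K : Type) [Field K] {n : ℕ} (Δ : Set (Finset (Fin n)))
    (i : ℤ) : Prop :=
  LinearMap.ker (bd K Δ i) ≤ LinearMap.range (bd K Δ (i + 1))

/-- The link of `Δ` with respect to a face `F`. -/
def link {n : ℕ} (Δ : Set (Finset (Fin n))) (F : Finset (Fin n)) : Set (Finset (Fin n)) :=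
  {G | Disjoint G F ∧ G ∪ F ∈ Δ}

/-- The dimension of `Δ` (an integer, `-1` if `Δ = {∅}`). -/
noncomputable def dimC {n : ℕ} (Δ : Set (Finset (Fin n))) : ℤ :=
  sSup ((fun F => (F.card : ℤ) - 1) '' Δ)

/-- Serre's condition `(S_r)` over the field `K`:  for every face `F` of `Δ`
(including the empty face), `H̃ᵢ(lk_Δ F; K) = 0` for all `i < min (r-1) (dim lk_Δ F)`. -/
def SerreCondition (K : Type) [Field K] {n : ℕ} (r : ℕ) (Δ : Set (Finset (Fin n))) : Prop :=
  ∀ F ∈ Δ, ∀ i : ℤ, i < min ((r : ℤ) - 1) (dimC (link Δ F)) →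
    ReducedHomologyVanishes K (link Δ F) i

/-- `faceCount Δ c` is the number of faces of `Δ` of cardinality `c`,
i.e. `f_{c-1}(Δ)`. -/
noncomputable def faceCount {n : ℕ} (Δ : Set (Finset (Fin n))) (c : ℕ) : ℕ :=
  Set.ncard {F | F ∈ Δ ∧ F.card = c}

/-- The `h`-vector of a complex `Δ` with `dim Δ = d - 1`, defined by the relation
`∑_{i=0}^{d} f_{i-1}(Δ) (x-1)^{d-i} = ∑_{i=0}^{d} h_i(Δ) x^{d-i}`; i.e. `h_k` is the
coefficient of `x^{d-k}` on the left-hand side (and `h_k = 0` for `k > d`). -/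
noncomputable def hVec {n : ℕ} (Δ : Set (Finset (Fin n))) (d : ℕ) (k : ℕ) : ℤ :=
  if k ≤ d then
    (∑ i ∈ Finset.range (d + 1),
      (faceCount Δ i : ℤ) • ((Polynomial.X - 1) ^ (d - i) : Polynomial ℤ)).coeff (d - k)
  else 0

open Polynomial Finset in
/-- The coefficient of `(X-1)^m`. -/
private lemma coeff_X_sub_one_pow (m k : ℕ) :
    ((X - 1 : Polynomial ℤ) ^ m).coeff k = (-1) ^ (m - k) * m.choose k := by
  have : (X - 1 : Polynomial ℤ) = X + C (-1) := by rw [map_neg, C_1]; ring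
  rw [this, coeff_X_add_C_pow]

private noncomputable def E (m k : ℕ) : ℤ := ((Polynomial.X - 1 : Polynomial ℤ) ^ m).coeff k

private lemma E_rec (m k : ℕ) : ((k : ℤ) + 1) * E m (k + 1) = ((k : ℤ) - m) * E m k := by
  unfold E
  rw [coeff_X_sub_one_pow, coeff_X_sub_one_pow]
  rcases le_or_gt m k with h | h
  · rcases eq_or_lt_of_le h with rfl | h'
    · simp [Nat.choose_succ_self]
    · rw [Nat.choose_eq_zero_of_lt h', Nat.choose_eq_zero_of_lt (by omega)]
      simp
  · have hc := Nat.choose_succ_right_eq m k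
    have hsub : m - (k + 1) + 1 = m - k := by omega
    have hint : ((m.choose (k + 1)) : ℤ) * (k + 1) = (m.choose k) * ((m : ℤ) - k) := by
      have := congrArg (fun t : ℕ => (t : ℤ)) hc
      push_cast [Nat.cast_sub h.le] at this
      linarith
    have hsign : ((-1 : ℤ)) ^ (m - k) = -(-1 : ℤ) ^ (m - (k + 1)) := by
      rw [← hsub, pow_succ]; ring
    rw [hsign]
    linear_combination ((-1 : ℤ) ^ (m - (k + 1))) * hint

open Finset in
private lemma hVec_eq {n : ℕ} (Δ : Set (Finset (Fin n))) (d k : ℕ) (hk : k ≤ d) :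
    hVec Δ d k = ∑ c ∈ range (d + 1), (faceCount Δ c : ℤ) * E (d - c) (d - k) := by
  rw [hVec, if_pos hk, Polynomial.finset_sum_coeff]
  refine Finset.sum_congr rfl fun c _ => ?_
  rw [Polynomial.coeff_smul]
  rfl

open Finset in
/-- Double counting: `∑_v f_{c-1}(lk v) = (c+1) f_c(Δ)`. -/
private lemma link_count {n : ℕ} (Δ : Set (Finset (Fin n))) (c : ℕ) :
    ∑ v : Fin n, (faceCount (link Δ {v}) c : ℤ) = ((c : ℤ) + 1) * faceCount Δ (c + 1) := by
  classical
  set T : Finset (Finset (Fin n)) := univ.filter (fun F => F ∈ Δ ∧ F.card = c + 1) with hT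
  have hfc : faceCount Δ (c + 1) = T.card := by
    rw [faceCount, ← Set.ncard_coe_finset]
    congr 1
    ext F; simp [hT]
  have hv : ∀ v : Fin n, faceCount (link Δ {v}) c = (T.filter (fun F => v ∈ F)).card := by
    intro v
    set S : Finset (Finset (Fin n)) := univ.filter (fun G => G ∈ link Δ {v} ∧ G.card = c) with hS
    have h1 : faceCount (link Δ {v}) c = S.card := by
      rw [faceCount, ← Set.ncard_coe_finset]
      congr 1
      ext G; simp [hS]
    rw [h1]
    have himg : S.image (insert v) = T.filter (fun F => v ∈ F) := by
      ext F
      simp only [mem_image, mem_filter, mem_univ, true_and, hS, hT]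
      constructor
      · rintro ⟨G, ⟨⟨hdisj, hmem⟩, hcard⟩, rfl⟩
        have hvG : v ∉ G := by
          intro hvG
          exact (Finset.disjoint_left.1 hdisj hvG) (Finset.mem_singleton_self v)
        have : insert v G = G ∪ {v} := by
          ext x; simp [or_comm]
        refine ⟨⟨this ▸ hmem, ?_⟩, Finset.mem_insert_self v G⟩
        rw [Finset.card_insert_of_notMem hvG, hcard]
      · rintro ⟨⟨hFΔ, hFcard⟩, hvF⟩
        refine ⟨F.erase v, ⟨⟨?_, ?_⟩, ?_⟩, Finset.insert_erase hvF⟩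
        · simp [Finset.disjoint_singleton_right]
        · have : F.erase v ∪ {v} = F := by
            ext x
            simp only [Finset.mem_union, Finset.mem_erase, Finset.mem_singleton]
            constructor
            · rintro (⟨_, hx⟩ | rfl) <;> [exact hx; exact hvF]
            · intro hx; by_cases hxv : x = v
              · exact Or.inr hxv
              · exact Or.inl ⟨hxv, hx⟩
          rw [this]; exact hFΔ
        · rw [Finset.card_erase_of_mem hvF, hFcard]; rfl
    rw [← himg]
    rw [Finset.card_image_of_injOn]
    intro a ha b hb hab
    simp only [Finset.mem_coe, hS, mem_filter, mem_univ, true_and] at ha hb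
    have hva : v ∉ a := fun h => (Finset.disjoint_left.1 ha.1.1 h) (Finset.mem_singleton_self v)
    have hvb : v ∉ b := fun h => (Finset.disjoint_left.1 hb.1.1 h) (Finset.mem_singleton_self v)
    have := congrArg (fun s => Finset.erase s v) hab
    simpa [Finset.erase_insert hva, Finset.erase_insert hvb] using this
  have key : ∑ v : Fin n, (faceCount (link Δ {v}) c : ℤ) =
      ∑ F ∈ T, (F.card : ℤ) := by
    calc ∑ v : Fin n, (faceCount (link Δ {v}) c : ℤ)
        = ∑ v : Fin n, ∑ F ∈ T, (if v ∈ F then (1 : ℤ) else 0) := by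
          refine Finset.sum_congr rfl fun v _ => ?_
          rw [hv v, Finset.card_filter]
          push_cast
          rfl
      _ = ∑ F ∈ T, ∑ v : Fin n, (if v ∈ F then (1 : ℤ) else 0) := Finset.sum_comm
      _ = ∑ F ∈ T, (F.card : ℤ) := by
          refine Finset.sum_congr rfl fun F _ => ?_
          rw [Finset.sum_ite_mem, Finset.univ_inter, Finset.sum_const]
          simp
  rw [key, hfc]
  have : ∀ F ∈ T, (F.card : ℤ) = (c : ℤ) + 1 := by
    intro F hF
    simp only [hT, mem_filter] at hF
    exact_mod_cast hF.2.2
  rw [Finset.sum_congr rfl this, Finset.sum_const, nsmul_eq_mul]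
  ring

/-- **Lemma (Swartz).**  Let `Δ` be a `(d-1)`-dimensional pure simplicial complex on
`[n]`.  Then for `i = 1, 2, …, d`,
`i·h_i(Δ) + (d-i+1)·h_{i-1}(Δ) = ∑_{v ∈ [n]} h_{i-1}(lk_Δ {v})`. -/
theorem swartz_h_identity {n : ℕ} (Δ : Set (Finset (Fin n))) (hΔ : IsSimplicialComplex Δ)
    (d : ℕ) (hd : dimC Δ = (d : ℤ) - 1)
    (hpure : ∀ F ∈ Δ, (∀ G ∈ Δ, F ⊆ G → G = F) → F.card = d) :
    ∀ i : ℕ, 1 ≤ i → i ≤ d →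
      (i : ℤ) * hVec Δ d i + ((d : ℤ) - i + 1) * hVec Δ d (i - 1) =
        ∑ v : Fin n, hVec (link Δ {v}) (d - 1) (i - 1) := by
  intro i h1 hi
  have hd1 : 1 ≤ d := le_trans h1 hi
  have hi1 : i - 1 ≤ d := le_trans (Nat.sub_le _ _) hi
  have hi1' : i - 1 ≤ d - 1 := by omega
  rw [hVec_eq Δ d i hi, hVec_eq Δ d (i - 1) hi1]
  have hrhs : ∀ v : Fin n, hVec (link Δ {v}) (d - 1) (i - 1) =
      ∑ c ∈ Finset.range d, (faceCount (link Δ {v}) c : ℤ) * E (d - 1 - c) (d - i) := by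
    intro v
    rw [hVec_eq _ (d - 1) (i - 1) hi1']
    have h2 : d - 1 + 1 = d := by omega
    have h3 : d - 1 - (i - 1) = d - i := by omega
    rw [h2, h3]
  simp only [hrhs]
  rw [Finset.sum_comm]
  have hstep : ∀ c ∈ Finset.range d,
      ∑ v : Fin n, (faceCount (link Δ {v}) c : ℤ) * E (d - 1 - c) (d - i) =
      ((c : ℤ) + 1) * (faceCount Δ (c + 1) : ℤ) * E (d - 1 - c) (d - i) := by
    intro c _
    rw [← Finset.sum_mul, link_count]
  rw [Finset.sum_congr rfl hstep]
  have hre : ∑ c ∈ Finset.range d,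
      ((c : ℤ) + 1) * (faceCount Δ (c + 1) : ℤ) * E (d - 1 - c) (d - i) =
      ∑ c ∈ Finset.range (d + 1), (c : ℤ) * (faceCount Δ c : ℤ) * E (d - c) (d - i) := by
    rw [Finset.sum_range_succ' (fun c => (c : ℤ) * (faceCount Δ c : ℤ) * E (d - c) (d - i)) d]
    simp only [Nat.cast_zero, zero_mul, add_zero]
    refine Finset.sum_congr rfl fun c _ => ?_
    have : d - (c + 1) = d - 1 - c := by omega
    rw [this]
    push_cast
    ring
  rw [hre, Finset.mul_sum, Finset.mul_sum, ← Finset.sum_add_distrib]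
  refine Finset.sum_congr rfl fun c hc => ?_
  simp only [Finset.mem_range] at hc
  have hcd : c ≤ d := by omega
  have hmk : d - (i - 1) = (d - i) + 1 := by omega
  rw [hmk]
  have h1' : ((d : ℤ) - i + 1) = ((d - i : ℕ) : ℤ) + 1 := by omega
  have h2' : (i : ℤ) = (d : ℤ) - ((d - i : ℕ) : ℤ) := by omega
  have h3' : (c : ℤ) = (d : ℤ) - ((d - c : ℕ) : ℤ) := by omega
  have hE := E_rec (d - c) (d - i)
  rw [h1', h2', h3']
  linear_combination (faceCount Δ c : ℤ) * hE

end SerrePaper
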